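/- arXiv:2306.13756 — 5 statements merged into one kernel-verified Lean document; each statement's English description precedes it below -/
import Mathlib

section
/- The weak head reduction of EPCF is deterministic: if an EPCF term M reduces in one weak head step to both N1 and N2, then N1 = N2. -/
inductive Tm : Type
  | var : String → Tm
  | app : Tm → Tm → Tm
  | lam : String → Tm → Tm
  | fixp : Tm → Tm
  | esub : Tm → String → Tm → Tm
  | zero : Tm
  | pred : Tm → Tm
  | succ : Tm → Tm
  | ifz : Tm → Tm → Tm → Tm

/-- Numerals `n̲ = succⁿ 0`. -/
def numeral : ℕ → Tm
  | 0 => Tm.zero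
  | n + 1 => Tm.succ (numeral n)

/-- Free variables of an EPCF term. -/
def fv : Tm → Finset String
  | .var x => {x}
  | .app M N => fv M ∪ fv N
  | .lam x M => fv M \ {x}
  | .fixp M => fv M
  | .esub M x N => (fv M \ {x}) ∪ fv N
  | .zero => ∅
  | .pred M => fv M
  | .succ M => fv M
  | .ifz L M N => fv L ∪ fv M ∪ fv N

/-- Substitution `M[x := Q]` (capture-free whenever `Q` is closed, which is
the only situation in which it is used for programs). -/
def subst (x : String) (Q : Tm) : Tm → Tm
  | .var y => if y = x then Q else .var y
  | .app M N => .app (subst x Q M) (subst x Q N)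
  | .lam y M => if y = x then .lam y M else .lam y (subst x Q M)
  | .fixp M => .fixp (subst x Q M)
  | .esub M y N =>
      if y = x then .esub M y (subst x Q N)
      else .esub (subst x Q M) y (subst x Q N)
  | .zero => .zero
  | .pred M => .pred (subst x Q M)
  | .succ M => .succ (subst x Q M)
  | .ifz L M N => .ifz (subst x Q L) (subst x Q M) (subst x Q N)

/-- PCF terms are the EPCF terms without explicit substitutions. -/
def IsPCF : Tm → Prop
  | .var _ => True
  | .app M N => IsPCF M ∧ IsPCF N
  | .lam _ M => IsPCF M
  | .fixp M => IsPCF M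
  | .esub _ _ _ => False
  | .zero => True
  | .pred M => IsPCF M
  | .succ M => IsPCF M
  | .ifz L M N => IsPCF L ∧ IsPCF M ∧ IsPCF N

/-- All explicit substitutions occurring in the term have closed right-hand sides. -/
def closedSubs : Tm → Prop
  | .var _ => True
  | .app M N => closedSubs M ∧ closedSubs N
  | .lam _ M => closedSubs M
  | .fixp M => closedSubs M
  | .esub M _ N => closedSubs M ∧ closedSubs N ∧ fv N = ∅
  | .zero => True
  | .pred M => closedSubs M
  | .succ M => closedSubs M
  | .ifz L M N => closedSubs L ∧ closedSubs M ∧ closedSubs N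

/-- An EPCF program: closed, and all explicit substitutions have closed bodies. -/
def IsProgram (M : Tm) : Prop := fv M = ∅ ∧ closedSubs M

/-- The collapse `M↓`, performing all explicit substitutions. -/
def collapse : Tm → Tm
  | .var x => .var x
  | .app M N => .app (collapse M) (collapse N)
  | .lam x M => .lam x (collapse M)
  | .fixp M => .fixp (collapse M)
  | .esub M x N => subst x (collapse N) (collapse M)
  | .zero => .zero
  | .pred M => .pred (collapse M)
  | .succ M => .succ (collapse M)
  | .ifz L M N => .ifz (collapse L) (collapse M) (collapse N)

/-- Lists of explicit substitutions `σ = ⟨N₁/x₁⟩⋯⟨Nₙ/xₙ⟩`. -/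
abbrev Subs := List (String × Tm)

/-- `M^σ`: the term `M` under the list of explicit substitutions `σ`. -/
def applySubs (M : Tm) : Subs → Tm
  | [] => M
  | (x, N) :: σ => applySubs (.esub M x N) σ

def lookupS (x : String) : Subs → Option Tm
  | [] => none
  | (y, N) :: σ => if x = y then some N else lookupS x σ

/-- The variables in `σ` are pairwise distinct. -/
def keysDistinct (σ : Subs) : Prop := (σ.map Prod.fst).Nodup

/-- Computation redexes of EPCF. -/
inductive CrRedex : Tm → Tm → Prop
  | beta (x : String) (M N : Tm) (σ : Subs) (hk : keysDistinct σ) :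
      CrRedex (.app (applySubs (.lam x M) σ) N) (.esub (applySubs M σ) x N)
  | pred_zero : CrRedex (.pred .zero) .zero
  | pred_succ (n : ℕ) : CrRedex (.pred (numeral (n + 1))) (numeral n)
  | ifz_zero (M N : Tm) : CrRedex (.ifz .zero M N) M
  | ifz_succ (n : ℕ) (M N : Tm) : CrRedex (.ifz (numeral (n + 1)) M N) N
  | fix_unfold (M : Tm) : CrRedex (.fixp M) (.app M (.fixp M))

/-- Percolation redexes of EPCF (the list `σ` is non-empty). -/
inductive PrRedex : Tm → Tm → Prop
  | var_hit (x : String) (N : Tm) (σ : Subs) (hne : σ ≠ []) (hk : keysDistinct σ)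
      (h : lookupS x σ = some N) : PrRedex (applySubs (.var x) σ) N
  | var_miss (x : String) (σ : Subs) (hne : σ ≠ []) (hk : keysDistinct σ)
      (h : lookupS x σ = none) : PrRedex (applySubs (.var x) σ) (.var x)
  | zeroS (σ : Subs) (hne : σ ≠ []) (hk : keysDistinct σ) :
      PrRedex (applySubs .zero σ) .zero
  | appS (M N : Tm) (σ : Subs) (hne : σ ≠ []) (hk : keysDistinct σ) :
      PrRedex (applySubs (.app M N) σ) (.app (applySubs M σ) (applySubs N σ))
  | predS (M : Tm) (σ : Subs) (hne : σ ≠ []) (hk : keysDistinct σ) :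
      PrRedex (applySubs (.pred M) σ) (.pred (applySubs M σ))
  | succS (M : Tm) (σ : Subs) (hne : σ ≠ []) (hk : keysDistinct σ) :
      PrRedex (applySubs (.succ M) σ) (.succ (applySubs M σ))
  | ifzS (L M N : Tm) (σ : Subs) (hne : σ ≠ []) (hk : keysDistinct σ) :
      PrRedex (applySubs (.ifz L M N) σ)
        (.ifz (applySubs L σ) (applySubs M σ) (applySubs N σ))
  | fixS (M : Tm) (σ : Subs) (hne : σ ≠ []) (hk : keysDistinct σ) :
      PrRedex (applySubs (.fixp M) σ) (.fixp (applySubs M σ))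

/-- Evaluation contexts `E ::= □ | E·P | pred E | succ E | ifz E P Q`. -/
inductive ECtx : Type
  | hole : ECtx
  | appL : ECtx → Tm → ECtx
  | pred : ECtx → ECtx
  | succ : ECtx → ECtx
  | ifz : ECtx → Tm → Tm → ECtx

def fill : ECtx → Tm → Tm
  | .hole, M => M
  | .appL E P, M => .app (fill E M) P
  | .pred E, M => .pred (fill E M)
  | .succ E, M => .succ (fill E M)
  | .ifz E P Q, M => .ifz (fill E M) P Q

/-- One computation reduction step (under an evaluation context). -/
def CrStep (M N : Tm) : Prop :=
  ∃ E A B, CrRedex A B ∧ M = fill E A ∧ N = fill E B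

/-- One percolation reduction step (under an evaluation context). -/
def PrStep (M N : Tm) : Prop :=
  ∃ E A B, PrRedex A B ∧ M = fill E A ∧ N = fill E B

/-- One weak head reduction step. -/
def WhStep (M N : Tm) : Prop := CrStep M N ∨ PrStep M N

/-- Multistep weak head reduction. -/
def WhSteps : Tm → Tm → Prop := Relation.ReflTransGen WhStep

/-- PCF weak head redexes. -/
inductive PcfRedex : Tm → Tm → Prop
  | beta (x : String) (P Q : Tm) : PcfRedex (.app (.lam x P) Q) (subst x Q P)
  | fix_unfold (P : Tm) : PcfRedex (.fixp P) (.app P (.fixp P))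
  | pred_zero : PcfRedex (.pred .zero) .zero
  | pred_succ (n : ℕ) : PcfRedex (.pred (numeral (n + 1))) (numeral n)
  | ifz_zero (P Q : Tm) : PcfRedex (.ifz .zero P Q) P
  | ifz_succ (n : ℕ) (P Q : Tm) : PcfRedex (.ifz (numeral (n + 1)) P Q) Q

/-- One PCF weak head reduction step. -/
def PcfStep (M N : Tm) : Prop :=
  ∃ E A B, PcfRedex A B ∧ M = fill E A ∧ N = fill E B

/-- Multistep PCF weak head reduction. -/
def PcfSteps : Tm → Tm → Prop := Relation.ReflTransGen PcfStep

/-! Auxiliary development for determinism. -/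

/-- Peel the outer explicit substitutions off a term. -/
def peel : Tm → Tm × Subs
  | .esub M x N => ((peel M).1, (peel M).2 ++ [(x, N)])
  | T => (T, [])

lemma peel_applySubs : ∀ (σ : Subs) (M : Tm),
    peel (applySubs M σ) = ((peel M).1, (peel M).2 ++ σ) := by
  intro σ
  induction σ with
  | nil => intro M; simp [applySubs]
  | cons p σ ih =>
      intro M
      obtain ⟨x, N⟩ := p
      simp [applySubs, ih, peel]

lemma applySubs_append : ∀ (σ σ' : Subs) (M : Tm),
    applySubs M (σ ++ σ') = applySubs (applySubs M σ) σ' := by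
  intro σ
  induction σ with
  | nil => intro σ' M; simp [applySubs]
  | cons p σ ih =>
      intro σ' M
      obtain ⟨x, N⟩ := p
      simp [applySubs, ih]

lemma peel_spec : ∀ T : Tm, applySubs (peel T).1 (peel T).2 = T := by
  intro T
  induction T with
  | esub M x N ihM ihN =>
      simp [peel, applySubs_append, ihM, applySubs]
  | _ => simp [peel, applySubs]

lemma applySubs_inj {C C' : Tm} {σ σ' : Subs}
    (hC : peel C = (C, [])) (hC' : peel C' = (C', []))
    (h : applySubs C σ = applySubs C' σ') : C = C' ∧ σ = σ' := by
  have h2 := congrArg peel h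
  rw [peel_applySubs, peel_applySubs, hC, hC'] at h2
  simpa using h2

lemma applySubs_cons_esub : ∀ (σ : Subs) (x : String) (N M : Tm),
    ∃ D y P, applySubs M ((x, N) :: σ) = .esub D y P := by
  intro σ
  induction σ with
  | nil => intro x N M; exact ⟨M, x, N, rfl⟩
  | cons p σ ih =>
      intro x N M
      obtain ⟨y, P⟩ := p
      simpa [applySubs] using ih y P (.esub M x N)

/-- A term is a weak head redex. -/
def Red (A : Tm) : Prop := ∃ B, CrRedex A B ∨ PrRedex A B

lemma pr_lhs_esub {A B : Tm} (h : PrRedex A B) : ∃ D y P, A = .esub D y P := by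
  cases h <;>
    first
    | (rename_i σ hne _ _
       rcases σ with _ | ⟨⟨y, P⟩, σ⟩
       · exact absurd rfl hne
       · exact applySubs_cons_esub σ y P _)
    | (rename_i σ hne _
       rcases σ with _ | ⟨⟨y, P⟩, σ⟩
       · exact absurd rfl hne
       · exact applySubs_cons_esub σ y P _)

lemma cr_pr_exclusive {A B B' : Tm} (h1 : CrRedex A B) (h2 : PrRedex A B') : False := by
  obtain ⟨D, y, P, rfl⟩ := pr_lhs_esub h2
  cases h1

/-- The (unique) result of a percolation redex, as a function. -/
def coreStep : Tm → Subs → Option Tm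
  | .var x, σ => some ((lookupS x σ).getD (.var x))
  | .zero, _ => some .zero
  | .app M N, σ => some (.app (applySubs M σ) (applySubs N σ))
  | .pred M, σ => some (.pred (applySubs M σ))
  | .succ M, σ => some (.succ (applySubs M σ))
  | .ifz L M N, σ => some (.ifz (applySubs L σ) (applySubs M σ) (applySubs N σ))
  | .fixp M, σ => some (.fixp (applySubs M σ))
  | _, _ => none

lemma pr_coreStep {A B : Tm} (h : PrRedex A B) :
    coreStep (peel A).1 (peel A).2 = some B := by
  cases h <;>
    simp_all [peel_applySubs, peel, coreStep]

lemma pr_det {A B B' : Tm} (h1 : PrRedex A B) (h2 : PrRedex A B') : B = B' := by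
  have e1 := pr_coreStep h1
  have e2 := pr_coreStep h2
  rw [e1] at e2
  exact Option.some.inj e2

/-- The (unique) result of a computation redex, as a function. -/
def crResult : Tm → Option Tm
  | .app L N =>
      match peel L with
      | (.lam x M, σ) => some (.esub (applySubs M σ) x N)
      | _ => none
  | .pred .zero => some .zero
  | .pred (.succ M) => some M
  | .ifz .zero M _ => some M
  | .ifz (.succ _) _ N => some N
  | .fixp M => some (.app M (.fixp M))
  | _ => none

lemma cr_crResult {A B : Tm} (h : CrRedex A B) : crResult A = some B := by
  cases h with
  | beta x M N σ hk =>
      simp [crResult, peel_applySubs, peel]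
  | pred_zero => rfl
  | pred_succ n => simp [numeral, crResult]
  | ifz_zero M N => rfl
  | ifz_succ n M N => simp [numeral, crResult]
  | fix_unfold M => rfl

lemma cr_det {A B B' : Tm} (h1 : CrRedex A B) (h2 : CrRedex A B') : B = B' := by
  have e1 := cr_crResult h1
  have e2 := cr_crResult h2
  rw [e1] at e2
  exact Option.some.inj e2

lemma red_succ {M : Tm} (h : Red (.succ M)) : False := by
  obtain ⟨B, h | h⟩ := h
  · cases h
  · obtain ⟨D, y, P, h⟩ := pr_lhs_esub h; cases h

lemma red_zero (h : Red .zero) : False := by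
  obtain ⟨B, h | h⟩ := h
  · cases h
  · obtain ⟨D, y, P, h⟩ := pr_lhs_esub h; cases h

lemma red_lamSubs {x : String} {M : Tm} {σ : Subs}
    (h : Red (applySubs (.lam x M) σ)) : False := by
  obtain ⟨B, h | h⟩ := h
  · rcases σ with _ | ⟨⟨y, P⟩, σ⟩
    · simp only [applySubs] at h; cases h
    · obtain ⟨D, z, Q, hE⟩ := applySubs_cons_esub σ y P (.lam x M)
      rw [hE] at h; cases h
  · have := pr_coreStep h
    rw [peel_applySubs] at this
    simp [peel, coreStep] at this

lemma red_app {L P : Tm} (h : Red (.app L P)) :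
    ∃ x M σ, L = applySubs (.lam x M) σ := by
  obtain ⟨B, h | h⟩ := h
  · cases h with
    | beta x M N σ hk => exact ⟨x, M, σ, rfl⟩
  · obtain ⟨D, y, Q, h⟩ := pr_lhs_esub h; cases h

lemma red_pred {M : Tm} (h : Red (.pred M)) : ∃ n, M = numeral n := by
  obtain ⟨B, h | h⟩ := h
  · cases h with
    | pred_zero => exact ⟨0, rfl⟩
    | pred_succ n => exact ⟨n + 1, rfl⟩
  · obtain ⟨D, y, Q, h⟩ := pr_lhs_esub h; cases h

lemma red_ifz {L M N : Tm} (h : Red (.ifz L M N)) : ∃ n, L = numeral n := by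
  obtain ⟨B, h | h⟩ := h
  · cases h with
    | ifz_zero _ _ => exact ⟨0, rfl⟩
    | ifz_succ n _ _ => exact ⟨n + 1, rfl⟩
  · obtain ⟨D, y, Q, h⟩ := pr_lhs_esub h; cases h

lemma numeral_not_fill : ∀ (n : ℕ) (E : ECtx) (A : Tm),
    Red A → numeral n = fill E A → False := by
  intro n
  induction n with
  | zero =>
      intro E A hR h
      cases E <;> simp [numeral, fill] at h
      subst h; exact red_zero hR
  | succ n ih =>
      intro E A hR h
      cases E with
      | hole => simp [numeral, fill] at h; subst h; exact red_succ hR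
      | succ E => simp [numeral, fill] at h; exact ih E A hR h
      | _ => simp [numeral, fill] at h

lemma lamSubs_not_fill {x : String} {M : Tm} {σ : Subs} {E : ECtx} {A : Tm}
    (h : applySubs (.lam x M) σ = fill E A) (hR : Red A) : False := by
  cases E with
  | hole => simp only [fill] at h; subst h; exact red_lamSubs hR
  | _ =>
      rcases σ with _ | ⟨⟨y, P⟩, σ⟩
      · simp [applySubs, fill] at h
      · obtain ⟨D, z, Q, hE⟩ := applySubs_cons_esub σ y P (.lam x M)
        rw [hE] at h; simp [fill] at h

lemma uniq_decomp : ∀ (E E' : ECtx) (A A' : Tm), Red A → Red A' →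
    fill E A = fill E' A' → E = E' ∧ A = A' := by
  intro E
  induction E with
  | hole =>
      intro E' A A' hA hA' h
      cases E' with
      | hole => exact ⟨rfl, h⟩
      | appL E₂ P =>
          simp only [fill] at h
          subst h
          obtain ⟨x, K, σ, hL⟩ := red_app hA
          exact (lamSubs_not_fill hL.symm hA').elim
      | pred E₂ =>
          simp only [fill] at h
          subst h
          obtain ⟨n, hL⟩ := red_pred hA
          exact (numeral_not_fill n E₂ A' hA' hL.symm).elim
      | succ E₂ =>
          simp only [fill] at h
          subst h
          exact (red_succ hA).elim
      | ifz E₂ P Q =>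
          simp only [fill] at h
          subst h
          obtain ⟨n, hL⟩ := red_ifz hA
          exact (numeral_not_fill n E₂ A' hA' hL.symm).elim
  | appL E₁ P ih =>
      intro E' A A' hA hA' h
      cases E' with
      | hole =>
          simp only [fill] at h
          subst h
          obtain ⟨x, K, σ, hL⟩ := red_app hA'
          exact (lamSubs_not_fill hL.symm hA).elim
      | appL E₂ P' =>
          simp only [fill] at h
          obtain ⟨h1, h2⟩ := Tm.app.inj h
          obtain ⟨hE, hAA⟩ := ih E₂ A A' hA hA' h1
          exact ⟨by rw [hE, h2], hAA⟩
      | _ => simp [fill] at h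
  | pred E₁ ih =>
      intro E' A A' hA hA' h
      cases E' with
      | hole =>
          simp only [fill] at h
          subst h
          obtain ⟨n, hL⟩ := red_pred hA'
          exact (numeral_not_fill n E₁ A hA hL.symm).elim
      | pred E₂ =>
          simp only [fill] at h
          obtain ⟨hE, hAA⟩ := ih E₂ A A' hA hA' (Tm.pred.inj h)
          exact ⟨by rw [hE], hAA⟩
      | _ => simp [fill] at h
  | succ E₁ ih =>
      intro E' A A' hA hA' h
      cases E' with
      | hole =>
          simp only [fill] at h
          subst h
          exact (red_succ hA').elim
      | succ E₂ =>
          simp only [fill] at h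
          obtain ⟨hE, hAA⟩ := ih E₂ A A' hA hA' (Tm.succ.inj h)
          exact ⟨by rw [hE], hAA⟩
      | _ => simp [fill] at h
  | ifz E₁ P Q ih =>
      intro E' A A' hA hA' h
      cases E' with
      | hole =>
          simp only [fill] at h
          subst h
          obtain ⟨n, hL⟩ := red_ifz hA'
          exact (numeral_not_fill n E₁ A hA hL.symm).elim
      | ifz E₂ P' Q' =>
          simp only [fill] at h
          obtain ⟨h1, h2, h3⟩ := Tm.ifz.inj h
          obtain ⟨hE, hAA⟩ := ih E₂ A A' hA hA' h1
          exact ⟨by rw [hE, h2, h3], hAA⟩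
      | _ => simp [fill] at h

/-- The weak head reduction of EPCF is deterministic. -/
theorem stmt_0 (M N₁ N₂ : Tm) (h₁ : WhStep M N₁) (h₂ : WhStep M N₂) : N₁ = N₂ := by
  have get : ∀ {P Q : Tm}, WhStep P Q →
      ∃ E A B, (CrRedex A B ∨ PrRedex A B) ∧ P = fill E A ∧ Q = fill E B := by
    rintro P Q (⟨E, A, B, h, h1, h2⟩ | ⟨E, A, B, h, h1, h2⟩)
    · exact ⟨E, A, B, Or.inl h, h1, h2⟩
    · exact ⟨E, A, B, Or.inr h, h1, h2⟩
  obtain ⟨E, A, B, hAB, rfl, rfl⟩ := get h₁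
  obtain ⟨E', A', B', hAB', hM, rfl⟩ := get h₂
  obtain ⟨hE, hA⟩ := uniq_decomp E E' A A' ⟨B, hAB⟩ ⟨B', hAB'⟩ hM
  subst hE; subst hA
  have hB : B = B' := by
    rcases hAB with h1 | h1 <;> rcases hAB' with h2 | h2
    · exact cr_det h1 h2
    · exact (cr_pr_exclusive h1 h2).elim
    · exact (cr_pr_exclusive h2 h1).elim
    · exact pr_det h1 h2
  rw [hB]
end

section
/- Define the head size |M| of an EPCF term by: |x| = |0| = 1; |M⟨N/x⟩| = |M|·(|N|+1); |M·N| = |λx.M| = |pred M| = |succ M| = |fix M| = |M|+1; |ifz L M N| = |L|+1. Then percolation reduction strictly decreases head size: if M →pr N then |M| > |N|. Consequently, percolation reduction is strongly normalizing. -/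
/-- The head size `|M|` of an EPCF term. -/
def hsize : Tm → ℕ
  | .var _ => 1
  | .zero => 1
  | .esub M _ N => hsize M * (hsize N + 1)
  | .app M _ => hsize M + 1
  | .lam _ M => hsize M + 1
  | .fixp M => hsize M + 1
  | .pred M => hsize M + 1
  | .succ M => hsize M + 1
  | .ifz L _ _ => hsize L + 1

def wgt (σ : Subs) : ℕ := (σ.map (fun p => hsize p.2 + 1)).prod

lemma hsize_pos (M : Tm) : 0 < hsize M := by
  induction M <;> simp [hsize] <;> positivity

lemma wgt_pos (σ : Subs) : 0 < wgt σ := by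
  induction σ with
  | nil => simp [wgt]
  | cons p σ ih =>
      simp only [wgt, List.map_cons, List.prod_cons] at *
      positivity

lemma wgt_ge_two (σ : Subs) (h : σ ≠ []) : 2 ≤ wgt σ := by
  cases σ with
  | nil => exact absurd rfl h
  | cons p σ =>
      have h1 := wgt_pos σ
      have h2 := hsize_pos p.2
      simp only [wgt, List.map_cons, List.prod_cons]
      calc 2 = 2 * 1 := by ring
      _ ≤ (hsize p.2 + 1) * wgt σ := Nat.mul_le_mul (by omega) h1

lemma hsize_applySubs (M : Tm) (σ : Subs) :
    hsize (applySubs M σ) = hsize M * wgt σ := by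
  induction σ generalizing M with
  | nil => simp [applySubs, wgt]
  | cons p σ ih =>
      obtain ⟨x, N⟩ := p
      simp only [applySubs, ih, wgt, List.map_cons, List.prod_cons, hsize]
      ring

lemma lookup_le (x : String) (N : Tm) (σ : Subs) (h : lookupS x σ = some N) :
    hsize N + 1 ≤ wgt σ := by
  induction σ with
  | nil => simp [lookupS] at h
  | cons p σ ih =>
      obtain ⟨y, P⟩ := p
      simp only [lookupS] at h
      simp only [wgt, List.map_cons, List.prod_cons]
      by_cases hxy : x = y
      · simp [hxy] at h
        rw [h]
        calc hsize N + 1 = (hsize N + 1) * 1 := by ring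
        _ ≤ (hsize N + 1) * wgt σ := Nat.mul_le_mul_left _ (wgt_pos σ)
      · simp [hxy] at h
        calc hsize N + 1 ≤ wgt σ := ih h
        _ = 1 * wgt σ := by ring
        _ ≤ (hsize P + 1) * wgt σ := Nat.mul_le_mul_right _ (by omega)

lemma prRedex_lt (A B : Tm) (h : PrRedex A B) : hsize B < hsize A := by
  cases h with
  | var_hit x N σ hne hk hl =>
      have := lookup_le x B σ hl
      rw [hsize_applySubs]
      simp only [hsize]; omega
  | var_miss x σ hne hk hl =>
      have := wgt_ge_two σ hne
      rw [hsize_applySubs]; simp only [hsize]; omega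
  | zeroS σ hne hk =>
      have := wgt_ge_two σ hne
      rw [hsize_applySubs]; simp only [hsize]; omega
  | appS M N σ hne hk =>
      have := wgt_ge_two σ hne
      have hM := hsize_pos M
      rw [hsize_applySubs]
      simp only [hsize, hsize_applySubs]
      nlinarith
  | predS M σ hne hk =>
      have := wgt_ge_two σ hne
      have hM := hsize_pos M
      rw [hsize_applySubs]
      simp only [hsize, hsize_applySubs]
      nlinarith
  | succS M σ hne hk =>
      have := wgt_ge_two σ hne
      have hM := hsize_pos M
      rw [hsize_applySubs]
      simp only [hsize, hsize_applySubs]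
      nlinarith
  | ifzS L M N σ hne hk =>
      have := wgt_ge_two σ hne
      have hL := hsize_pos L
      rw [hsize_applySubs]
      simp only [hsize, hsize_applySubs]
      nlinarith
  | fixS M σ hne hk =>
      have := wgt_ge_two σ hne
      have hM := hsize_pos M
      rw [hsize_applySubs]
      simp only [hsize, hsize_applySubs]
      nlinarith

lemma fill_lt (E : ECtx) {A B : Tm} (h : hsize B < hsize A) :
    hsize (fill E B) < hsize (fill E A) := by
  induction E with
  | hole => exact h
  | appL E P ih => simpa [fill, hsize] using ih
  | pred E ih => simpa [fill, hsize] using ih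
  | succ E ih => simpa [fill, hsize] using ih
  | ifz E P Q ih => simpa [fill, hsize] using ih

/-- Percolation reduction strictly decreases the head size; consequently it is
strongly normalizing (there is no infinite `→pr` reduction sequence). -/
theorem stmt_1 :
    (∀ M N : Tm, PrStep M N → hsize N < hsize M) ∧
    (∀ f : ℕ → Tm, ¬ ∀ n, PrStep (f n) (f (n + 1))) := by
  have key : ∀ M N : Tm, PrStep M N → hsize N < hsize M := by
    rintro M N ⟨E, A, B, hr, rfl, rfl⟩
    exact fill_lt E (prRedex_lt A B hr)
  refine ⟨key, fun f hf => ?_⟩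
  have : ∀ n, hsize (f (n + 1)) < hsize (f n) := fun n => key _ _ (hf n)
  have h2 : ∀ n, hsize (f n) + n ≤ hsize (f 0) := by
    intro n
    induction n with
    | zero => omega
    | succ n ih => have := this n; omega
  have := h2 (hsize (f 0) + 1)
  have := hsize_pos (f (hsize (f 0) + 1))
  omega
end

section
/- If an EPCF program M weak-head reduces in finitely many steps to a numeral n, then its collapse M↓ multistep PCF-reduces to n: M ↠wh n implies M↓ ↠PCF n. -/
/-! ### Auxiliary development -/

theorem numeral_fv : ∀ n, fv (numeral n) = ∅
  | 0 => rfl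
  | n + 1 => by simp [numeral, fv, numeral_fv n]

theorem numeral_cs : ∀ n, closedSubs (numeral n)
  | 0 => trivial
  | n + 1 => numeral_cs n

theorem numeral_collapse : ∀ n, collapse (numeral n) = numeral n
  | 0 => rfl
  | n + 1 => by simp [numeral, collapse, numeral_collapse n]

theorem subst_id (x : String) (Q : Tm) : ∀ T, x ∉ fv T → subst x Q T = T := by
  intro T
  induction T with
  | var y => intro h; simp [fv] at h; simp [subst, Ne.symm h]
  | app M N ihM ihN => intro h; simp [fv] at h; simp [subst, ihM h.1, ihN h.2]
  | lam y M ihM =>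
    intro h; simp [fv] at h
    by_cases hxy : y = x
    · simp [subst, hxy]
    · have : x ∉ fv M := fun hx => hxy (h hx).symm
      simp [subst, hxy, ihM this]
  | fixp M ihM => intro h; simp [fv] at h; simp [subst, ihM h]
  | esub M y N ihM ihN =>
    intro h; simp [fv] at h
    by_cases hxy : y = x
    · simp [subst, hxy, ihN h.2]
    · have : x ∉ fv M := fun hx => hxy (h.1 hx).symm
      simp [subst, hxy, ihM this, ihN h.2]
  | zero => intro _; rfl
  | pred M ihM => intro h; simp [fv] at h; simp [subst, ihM h]
  | succ M ihM => intro h; simp [fv] at h; simp [subst, ihM h]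
  | ifz L M N ihL ihM ihN =>
    intro h; simp [fv] at h
    simp [subst, ihL h.1, ihM h.2.1, ihN h.2.2]

theorem fv_subst (x : String) (Q : Tm) :
    ∀ T, fv (subst x Q T) ⊆ (fv T \ {x}) ∪ fv Q := by
  intro T
  induction T with
  | var y =>
    by_cases h : y = x
    · simp [subst, h, fv]
    · simp only [subst, if_neg h, fv]
      intro a ha
      simp at ha
      subst ha
      simp [h]
  | app M N ihM ihN =>
    simp only [subst, fv]
    intro a ha
    rcases Finset.mem_union.mp ha with ha | ha
    · rcases Finset.mem_union.mp (ihM ha) with h | h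
      · simp at h ⊢; tauto
      · simp at h ⊢; tauto
    · rcases Finset.mem_union.mp (ihN ha) with h | h
      · simp at h ⊢; tauto
      · simp at h ⊢; tauto
  | lam y M ihM =>
    by_cases h : y = x
    · subst h
      simp only [subst, if_pos rfl, fv]
      intro a ha; simp [fv] at ha ⊢ <;> tauto
    · simp only [subst, if_neg h, fv]
      intro a ha; simp at ha
      rcases ha with ⟨ha, hay⟩
      have := ihM ha; simp at this ⊢; tauto
  | fixp M ihM => simpa [subst, fv] using ihM
  | esub M y N ihM ihN =>
    by_cases h : y = x
    · subst h
      simp only [subst, if_pos rfl, fv]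
      intro a ha; simp [fv] at ha
      rcases ha with ⟨ha, hay⟩ | ha
      · simp [fv]; tauto
      · have := ihN ha; simp at this ⊢; tauto
    · simp only [subst, if_neg h, fv]
      intro a ha; simp at ha
      rcases ha with ⟨ha, hay⟩ | ha
      · have := ihM ha; simp at this ⊢; tauto
      · have := ihN ha; simp at this ⊢; tauto
  | zero => simp [subst, fv]
  | pred M ihM => simpa [subst, fv] using ihM
  | succ M ihM => simpa [subst, fv] using ihM
  | ifz L M N ihL ihM ihN =>
    simp only [subst, fv]
    intro a ha
    rcases Finset.mem_union.mp ha with ha | ha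
    rcases Finset.mem_union.mp ha with ha | ha

    · have := ihL ha; simp at this ⊢; tauto
    · have := ihM ha; simp at this ⊢; tauto
    · have := ihN ha; simp at this ⊢; tauto

theorem fv_collapse : ∀ T, closedSubs T → fv (collapse T) ⊆ fv T := by
  intro T
  induction T with
  | var y => intro _; simp [collapse]
  | app M N ihM ihN =>
    intro h
    simp only [collapse, fv]
    exact Finset.union_subset_union (ihM h.1) (ihN h.2)
  | lam y M ihM =>
    intro h
    simp only [collapse, fv]
    exact Finset.sdiff_subset_sdiff (ihM h) (le_refl _)
  | fixp M ihM => intro h; simpa [collapse, fv] using ihM h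
  | esub M y N ihM ihN =>
    intro h
    simp only [collapse, fv]
    intro a ha
    rcases Finset.mem_union.mp (fv_subst y (collapse N) (collapse M) ha) with hh | hh
    · simp at hh ⊢
      exact Or.inl ⟨ihM h.1 hh.1, hh.2⟩
    · exfalso
      have := ihN h.2.1 hh
      rw [h.2.2] at this
      simp at this
  | zero => intro _; simp [collapse]
  | pred M ihM => intro h; simpa [collapse, fv] using ihM h
  | succ M ihM => intro h; simpa [collapse, fv] using ihM h
  | ifz L M N ihL ihM ihN =>
    intro h
    simp only [collapse, fv]
    exact Finset.union_subset_union (Finset.union_subset_union (ihL h.1) (ihM h.2.1)) (ihN h.2.2)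

theorem collapse_closed {T : Tm} (hcs : closedSubs T) (hfv : fv T = ∅) :
    fv (collapse T) = ∅ := by
  have := fv_collapse T hcs
  rw [hfv] at this
  exact Finset.subset_empty.mp this
/-! ### Substitution lists -/

def entriesOK (σ : Subs) : Prop := ∀ p ∈ σ, closedSubs p.2 ∧ fv p.2 = ∅

theorem cs_applySubs : ∀ (σ : Subs) (T : Tm),
    closedSubs (applySubs T σ) ↔ closedSubs T ∧ entriesOK σ := by
  intro σ
  induction σ with
  | nil => intro T; simp [applySubs, entriesOK]
  | cons p σ ih =>
    intro T
    obtain ⟨y, N⟩ := p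
    simp only [applySubs, ih, entriesOK, closedSubs, List.mem_cons]
    constructor
    · rintro ⟨⟨h1, h2, h3⟩, h4⟩
      exact ⟨h1, fun q hq => by rcases hq with rfl | hq; exact ⟨h2, h3⟩; exact h4 q hq⟩
    · rintro ⟨h1, h4⟩
      refine ⟨⟨h1, (h4 (y, N) (Or.inl rfl)).1, (h4 (y, N) (Or.inl rfl)).2⟩, fun q hq => h4 q (Or.inr hq)⟩

theorem fv_applySubs : ∀ (σ : Subs) (T : Tm), entriesOK σ →
    ∀ a, a ∈ fv (applySubs T σ) ↔ a ∈ fv T ∧ a ∉ σ.map Prod.fst := by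
  intro σ
  induction σ with
  | nil => intro T _ a; simp [applySubs]
  | cons p σ ih =>
    intro T hok a
    obtain ⟨y, N⟩ := p
    have hN : fv N = ∅ := (hok (y, N) (List.mem_cons_self)).2
    have hok' : entriesOK σ := fun q hq => hok q (List.mem_cons_of_mem _ hq)
    simp only [applySubs, ih _ hok', fv, hN, List.map_cons, List.mem_cons]
    simp only [Finset.mem_union, Finset.mem_sdiff, Finset.mem_singleton,
      Finset.notMem_empty, or_false]
    tauto

/-- Collapse composed with a substitution list. -/
def chain : Subs → Tm → Tm
  | [], T => T
  | (y, N) :: σ, T => chain σ (subst y (collapse N) T)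

theorem collapse_applySubs : ∀ (σ : Subs) (T : Tm),
    collapse (applySubs T σ) = chain σ (collapse T) := by
  intro σ
  induction σ with
  | nil => intro T; rfl
  | cons p σ ih =>
    intro T
    obtain ⟨y, N⟩ := p
    simp only [applySubs, ih, chain, collapse]

theorem chain_app : ∀ (σ : Subs) (P Q : Tm),
    chain σ (.app P Q) = .app (chain σ P) (chain σ Q) := by
  intro σ
  induction σ with
  | nil => intros; rfl
  | cons p σ ih => intro P Q; obtain ⟨y, N⟩ := p; simp [chain, subst, ih]

theorem chain_pred : ∀ (σ : Subs) (P : Tm), chain σ (.pred P) = .pred (chain σ P) := by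
  intro σ
  induction σ with
  | nil => intros; rfl
  | cons p σ ih => intro P; obtain ⟨y, N⟩ := p; simp [chain, subst, ih]

theorem chain_succ : ∀ (σ : Subs) (P : Tm), chain σ (.succ P) = .succ (chain σ P) := by
  intro σ
  induction σ with
  | nil => intros; rfl
  | cons p σ ih => intro P; obtain ⟨y, N⟩ := p; simp [chain, subst, ih]

theorem chain_fixp : ∀ (σ : Subs) (P : Tm), chain σ (.fixp P) = .fixp (chain σ P) := by
  intro σ
  induction σ with
  | nil => intros; rfl
  | cons p σ ih => intro P; obtain ⟨y, N⟩ := p; simp [chain, subst, ih]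

theorem chain_zero : ∀ (σ : Subs), chain σ .zero = .zero := by
  intro σ
  induction σ with
  | nil => rfl
  | cons p σ ih => obtain ⟨y, N⟩ := p; simp [chain, subst, ih]

theorem chain_ifz : ∀ (σ : Subs) (L P Q : Tm),
    chain σ (.ifz L P Q) = .ifz (chain σ L) (chain σ P) (chain σ Q) := by
  intro σ
  induction σ with
  | nil => intros; rfl
  | cons p σ ih => intro L P Q; obtain ⟨y, N⟩ := p; simp [chain, subst, ih]

theorem chain_lam : ∀ (σ : Subs) (x : String) (P : Tm),
    x ∉ σ.map Prod.fst → chain σ (.lam x P) = .lam x (chain σ P) := by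
  intro σ
  induction σ with
  | nil => intros; rfl
  | cons p σ ih =>
    intro x P hx
    obtain ⟨y, N⟩ := p
    simp only [List.map_cons, List.mem_cons] at hx
    push_neg at hx
    have hyx : ¬ (x = y) := hx.1
    simp [chain, subst, hyx, ih _ _ hx.2]

theorem chain_closed : ∀ (σ : Subs) (T : Tm), fv T = ∅ → chain σ T = T := by
  intro σ
  induction σ with
  | nil => intros; rfl
  | cons p σ ih =>
    intro T hT
    obtain ⟨y, N⟩ := p
    have : subst y (collapse N) T = T := subst_id _ _ _ (by simp [hT])
    simp [chain, this, ih _ hT]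

theorem lookup_mem : ∀ (σ : Subs) (x : String) (N : Tm),
    lookupS x σ = some N → (x, N) ∈ σ := by
  intro σ
  induction σ with
  | nil => intro x N h; simp [lookupS] at h
  | cons p σ ih =>
    intro x N h
    obtain ⟨y, P⟩ := p
    by_cases hxy : x = y
    · simp [lookupS, hxy] at h
      subst hxy; subst h; exact List.mem_cons_self
    · simp [lookupS, hxy] at h
      exact List.mem_cons_of_mem _ (ih _ _ h)

theorem chain_var_hit : ∀ (σ : Subs) (x : String) (N : Tm), entriesOK σ →
    lookupS x σ = some N → chain σ (.var x) = collapse N := by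
  intro σ
  induction σ with
  | nil => intro x N _ h; simp [lookupS] at h
  | cons p σ ih =>
    intro x N hok h
    obtain ⟨y, P⟩ := p
    have hok' : entriesOK σ := fun q hq => hok q (List.mem_cons_of_mem _ hq)
    by_cases hxy : x = y
    · simp [lookupS, hxy] at h
      subst h
      have hP : fv P = ∅ := (hok (y, P) (List.mem_cons_self)).2
      have hPc : closedSubs P := (hok (y, P) (List.mem_cons_self)).1
      simp [chain, subst, hxy, chain_closed σ _ (collapse_closed hPc hP)]
    · simp [lookupS, hxy] at h
      simp [chain, subst, hxy, ih _ _ hok' h]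

theorem chain_var_none : ∀ (σ : Subs) (x : String),
    lookupS x σ = none → chain σ (.var x) = .var x := by
  intro σ
  induction σ with
  | nil => intros; rfl
  | cons p σ ih =>
    intro x h
    obtain ⟨y, P⟩ := p
    by_cases hxy : x = y
    · simp [lookupS, hxy] at h
    · simp [lookupS, hxy] at h
      simp [chain, subst, hxy, ih _ h]

theorem lookup_none_iff : ∀ (σ : Subs) (x : String),
    lookupS x σ = none ↔ x ∉ σ.map Prod.fst := by
  intro σ
  induction σ with
  | nil => intro x; simp [lookupS]
  | cons p σ ih =>
    intro x
    obtain ⟨y, P⟩ := p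
    by_cases hxy : x = y
    · simp [lookupS, hxy]
    · simp [lookupS, hxy, ih]
/-! ### Spines and bad terms -/

def spine : Tm → Subs
  | .esub M x N => spine M ++ [(x, N)]
  | _ => []

@[simp] theorem spine_var (x) : spine (.var x) = [] := rfl
@[simp] theorem spine_app (M N) : spine (.app M N) = [] := rfl
@[simp] theorem spine_lam (x M) : spine (.lam x M) = [] := rfl
@[simp] theorem spine_fixp (M) : spine (.fixp M) = [] := rfl
@[simp] theorem spine_esub (M x N) : spine (.esub M x N) = spine M ++ [(x, N)] := rfl
@[simp] theorem spine_zero : spine .zero = [] := rfl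
@[simp] theorem spine_pred (M) : spine (.pred M) = [] := rfl
@[simp] theorem spine_succ (M) : spine (.succ M) = [] := rfl
@[simp] theorem spine_ifz (L M N) : spine (.ifz L M N) = [] := rfl

theorem spine_applySubs : ∀ (σ : Subs) (T : Tm),
    spine (applySubs T σ) = spine T ++ σ := by
  intro σ
  induction σ with
  | nil => intro T; simp [applySubs]
  | cons p σ ih =>
    intro T
    obtain ⟨y, N⟩ := p
    simp [applySubs, ih]

def Bad (T : Tm) : Prop := ¬ ((spine T).map Prod.fst).Nodup

theorem bad_esub {T : Tm} (h : Bad T) : ∃ M x N, T = .esub M x N := by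
  cases T <;> first
    | exact absurd List.nodup_nil h
    | exact ⟨_, _, _, rfl⟩

theorem applySubs_esub_top : ∀ (σ : Subs) (M : Tm) (x : String) (N : Tm),
    ∃ M' x' N', applySubs (Tm.esub M x N) σ = .esub M' x' N' := by
  intro σ
  induction σ with
  | nil => intro M x N; exact ⟨M, x, N, rfl⟩
  | cons p σ ih =>
    intro M x N
    obtain ⟨y, P⟩ := p
    exact ih _ _ _

theorem redex_nodup {A B : Tm} (hr : CrRedex A B ∨ PrRedex A B) :
    ((spine A).map Prod.fst).Nodup := by
  rcases hr with hr | hr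
  · cases hr <;> simp
  · cases hr <;> simp [spine_applySubs, keysDistinct] <;> assumption

theorem fill_ne_numeral : ∀ (E : ECtx) (M : Tm) (x : String) (N : Tm) (k : ℕ),
    fill E (Tm.esub M x N) ≠ numeral k := by
  intro E
  induction E with
  | hole => intro M x N k; cases k <;> simp [fill, numeral]
  | appL E P ih => intro M x N k; cases k <;> simp [fill, numeral]
  | pred E ih => intro M x N k; cases k <;> simp [fill, numeral]
  | succ E ih =>
    intro M x N k
    cases k with
    | zero => simp [fill, numeral]
    | succ k => simp [fill, numeral]; exact ih M x N k
  | ifz E P Q ih => intro M x N k; cases k <;> simp [fill, numeral]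

theorem fill_ne_esub_of_ne_hole : ∀ (E : ECtx) (T M : Tm) (x : String) (N : Tm),
    E ≠ .hole → fill E T ≠ .esub M x N := by
  intro E T M x N h
  cases E <;> simp [fill] at h ⊢
/-! ### Stuckness of bad terms -/

theorem applySubs_cons_esub_s6 (σ : Subs) (p : String × Tm) (X : Tm) :
    ∃ M' x' N', applySubs X (p :: σ) = .esub M' x' N' := by
  obtain ⟨y, N⟩ := p
  exact applySubs_esub_top σ X y N

theorem pr_is_esub {A B : Tm} (hr : PrRedex A B) : ∃ M x N, A = Tm.esub M x N := by
  cases hr with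
  | var_hit x N σ hne hk h =>
    rcases σ with _ | ⟨p, σ'⟩
    · exact absurd rfl hne
    · exact applySubs_cons_esub_s6 σ' p _
  | var_miss x σ hne hk h =>
    rcases σ with _ | ⟨p, σ'⟩
    · exact absurd rfl hne
    · exact applySubs_cons_esub_s6 σ' p _
  | zeroS σ hne hk =>
    rcases σ with _ | ⟨p, σ'⟩
    · exact absurd rfl hne
    · exact applySubs_cons_esub_s6 σ' p _
  | appS M N σ hne hk =>
    rcases σ with _ | ⟨p, σ'⟩
    · exact absurd rfl hne
    · exact applySubs_cons_esub_s6 σ' p _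
  | predS M σ hne hk =>
    rcases σ with _ | ⟨p, σ'⟩
    · exact absurd rfl hne
    · exact applySubs_cons_esub_s6 σ' p _
  | succS M σ hne hk =>
    rcases σ with _ | ⟨p, σ'⟩
    · exact absurd rfl hne
    · exact applySubs_cons_esub_s6 σ' p _
  | ifzS L M N σ hne hk =>
    rcases σ with _ | ⟨p, σ'⟩
    · exact absurd rfl hne
    · exact applySubs_cons_esub_s6 σ' p _
  | fixS M σ hne hk =>
    rcases σ with _ | ⟨p, σ'⟩
    · exact absurd rfl hne
    · exact applySubs_cons_esub_s6 σ' p _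

theorem fill_bad_ne_lam_subs (E : ECtx) (T : Tm) (hT : Bad T) (x : String) (M : Tm)
    (σ : Subs) (hk : keysDistinct σ) : fill E T ≠ applySubs (.lam x M) σ := by
  intro h
  cases σ with
  | nil =>
    cases E with
    | hole =>
      obtain ⟨_, _, _, rfl⟩ := bad_esub hT
      simp [applySubs, fill] at h
    | appL E P => simp [applySubs, fill] at h
    | pred E => simp [applySubs, fill] at h
    | succ E => simp [applySubs, fill] at h
    | ifz E P Q => simp [applySubs, fill] at h
  | cons p σ' =>
    cases E with
    | hole =>
      simp only [fill] at h
      rw [Bad, h, spine_applySubs] at hT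
      simp only [spine_lam, List.nil_append] at hT
      exact hT hk
    | appL E P =>
      obtain ⟨M', x', N', he⟩ := applySubs_cons_esub_s6 σ' p (Tm.lam x M)
      rw [he] at h; simp [fill] at h
    | pred E =>
      obtain ⟨M', x', N', he⟩ := applySubs_cons_esub_s6 σ' p (Tm.lam x M)
      rw [he] at h; simp [fill] at h
    | succ E =>
      obtain ⟨M', x', N', he⟩ := applySubs_cons_esub_s6 σ' p (Tm.lam x M)
      rw [he] at h; simp [fill] at h
    | ifz E P Q =>
      obtain ⟨M', x', N', he⟩ := applySubs_cons_esub_s6 σ' p (Tm.lam x M)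
      rw [he] at h; simp [fill] at h

theorem no_step (A B : Tm) (hr : CrRedex A B ∨ PrRedex A B) :
    ∀ (E : ECtx) (T : Tm), Bad T → ∀ (E' : ECtx), fill E T = fill E' A → False := by
  intro E
  induction E with
  | hole =>
    intro T hT E' h
    obtain ⟨M₀, x₀, N₀, rfl⟩ := bad_esub hT
    cases E' with
    | hole =>
      simp only [fill] at h
      rw [Bad, h] at hT
      exact hT (redex_nodup hr)
    | appL E₂ P => simp [fill] at h
    | pred E₂ => simp [fill] at h
    | succ E₂ => simp [fill] at h
    | ifz E₂ P Q => simp [fill] at h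
  | appL E₂ P ih =>
    intro T hT E' h
    cases E' with
    | hole =>
      simp only [fill] at h
      rcases hr with hr | hr
      · cases hr with
        | beta x M N σ hk =>
          injection h with h1 h2
          exact fill_bad_ne_lam_subs E₂ T hT x M σ hk h1
        | pred_zero => simp at h
        | pred_succ n => simp at h
        | ifz_zero M N => simp at h
        | ifz_succ n M N => simp at h
        | fix_unfold M => simp at h
      · obtain ⟨M', x', N', rfl⟩ := pr_is_esub hr
        simp at h
    | appL E₃ Q =>
      simp only [fill] at h
      injection h with h1 h2
      exact ih T hT E₃ h1
    | pred E₃ => simp [fill] at h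
    | succ E₃ => simp [fill] at h
    | ifz E₃ P' Q' => simp [fill] at h
  | pred E₂ ih =>
    intro T hT E' h
    obtain ⟨M₀, x₀, N₀, rfl⟩ := bad_esub hT
    cases E' with
    | hole =>
      simp only [fill] at h
      rcases hr with hr | hr
      · cases hr with
        | beta x M N σ hk => simp at h
        | pred_zero =>
          injection h with h1
          exact fill_ne_numeral E₂ M₀ x₀ N₀ 0 h1
        | pred_succ n =>
          injection h with h1
          exact fill_ne_numeral E₂ M₀ x₀ N₀ (n + 1) h1
        | ifz_zero M N => simp at h
        | ifz_succ n M N => simp at h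
        | fix_unfold M => simp at h
      · obtain ⟨M', x', N', rfl⟩ := pr_is_esub hr
        simp at h
    | appL E₃ Q => simp [fill] at h
    | pred E₃ =>
      simp only [fill] at h
      injection h with h1
      exact ih _ hT E₃ h1
    | succ E₃ => simp [fill] at h
    | ifz E₃ P' Q' => simp [fill] at h
  | succ E₂ ih =>
    intro T hT E' h
    obtain ⟨M₀, x₀, N₀, rfl⟩ := bad_esub hT
    cases E' with
    | hole =>
      simp only [fill] at h
      rcases hr with hr | hr
      · cases hr <;> simp at h
      · obtain ⟨M', x', N', rfl⟩ := pr_is_esub hr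
        simp at h
    | appL E₃ Q => simp [fill] at h
    | pred E₃ => simp [fill] at h
    | succ E₃ =>
      simp only [fill] at h
      injection h with h1
      exact ih _ hT E₃ h1
    | ifz E₃ P' Q' => simp [fill] at h
  | ifz E₂ P Q ih =>
    intro T hT E' h
    obtain ⟨M₀, x₀, N₀, rfl⟩ := bad_esub hT
    cases E' with
    | hole =>
      simp only [fill] at h
      rcases hr with hr | hr
      · cases hr with
        | beta x M N σ hk => simp at h
        | pred_zero => simp at h
        | pred_succ n => simp at h
        | ifz_zero M N =>
          injection h with h1 h2 h3
          exact fill_ne_numeral E₂ M₀ x₀ N₀ 0 h1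
        | ifz_succ n M N =>
          injection h with h1 h2 h3
          exact fill_ne_numeral E₂ M₀ x₀ N₀ (n + 1) h1
        | fix_unfold M => simp at h
      · obtain ⟨M', x', N', rfl⟩ := pr_is_esub hr
        simp at h
    | appL E₃ Q' => simp [fill] at h
    | pred E₃ => simp [fill] at h
    | succ E₃ => simp [fill] at h
    | ifz E₃ P' Q' =>
      simp only [fill] at h
      injection h with h1 h2 h3
      exact ih _ hT E₃ h1
/-! ### Contexts: free variables, closed substitutions, collapse -/

def collapseE : ECtx → ECtx
  | .hole => .hole
  | .appL E P => .appL (collapseE E) (collapse P)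
  | .pred E => .pred (collapseE E)
  | .succ E => .succ (collapseE E)
  | .ifz E P Q => .ifz (collapseE E) (collapse P) (collapse Q)

theorem collapse_fill : ∀ (E : ECtx) (A : Tm),
    collapse (fill E A) = fill (collapseE E) (collapse A) := by
  intro E
  induction E with
  | hole => intro A; rfl
  | appL E P ih => intro A; simp [fill, collapse, collapseE, ih]
  | pred E ih => intro A; simp [fill, collapse, collapseE, ih]
  | succ E ih => intro A; simp [fill, collapse, collapseE, ih]
  | ifz E P Q ih => intro A; simp [fill, collapse, collapseE, ih]

theorem fv_fill_sub : ∀ (E : ECtx) (A : Tm), fv A ⊆ fv (fill E A) := by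
  intro E
  induction E with
  | hole => intro A; simp [fill]
  | appL E P ih =>
    intro A
    exact (ih A).trans (by simp [fill, fv])
  | pred E ih => intro A; exact (ih A).trans (by simp [fill, fv])
  | succ E ih => intro A; exact (ih A).trans (by simp [fill, fv])
  | ifz E P Q ih =>
    intro A
    refine (ih A).trans ?_
    simp only [fill, fv]
    intro a ha
    simp [ha]

theorem fv_fill_mono : ∀ (E : ECtx) (A B : Tm), fv B ⊆ fv A →
    fv (fill E B) ⊆ fv (fill E A) := by
  intro E
  induction E with
  | hole => intro A B h; simpa [fill] using h
  | appL E P ih =>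
    intro A B h
    simp only [fill, fv]
    exact Finset.union_subset_union (ih A B h) (le_refl _)
  | pred E ih => intro A B h; simpa [fill, fv] using ih A B h
  | succ E ih => intro A B h; simpa [fill, fv] using ih A B h
  | ifz E P Q ih =>
    intro A B h
    simp only [fill, fv]
    exact Finset.union_subset_union (Finset.union_subset_union (ih A B h) (le_refl _)) (le_refl _)

theorem cs_fill_elim : ∀ (E : ECtx) (A : Tm), closedSubs (fill E A) → closedSubs A := by
  intro E
  induction E with
  | hole => intro A h; exact h
  | appL E P ih => intro A h; exact ih A h.1
  | pred E ih => intro A h; exact ih A h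
  | succ E ih => intro A h; exact ih A h
  | ifz E P Q ih => intro A h; exact ih A h.1

theorem cs_fill_intro : ∀ (E : ECtx) (A B : Tm),
    closedSubs (fill E A) → closedSubs B → closedSubs (fill E B) := by
  intro E
  induction E with
  | hole => intro A B _ hB; exact hB
  | appL E P ih => intro A B h hB; exact ⟨ih A B h.1 hB, h.2⟩
  | pred E ih => intro A B h hB; exact ih A B h hB
  | succ E ih => intro A B h hB; exact ih A B h hB
  | ifz E P Q ih => intro A B h hB; exact ⟨ih A B h.1 hB, h.2.1, h.2.2⟩
/-! ### Subject reduction and simulation -/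

theorem redex_preserve {A B : Tm} (hr : CrRedex A B ∨ PrRedex A B)
    (hfv : fv A = ∅) (hcs : closedSubs A) : fv B = ∅ ∧ closedSubs B := by
  rcases hr with hr | hr
  · cases hr with
    | beta x M N σ hk =>
      have hcs1 : closedSubs (applySubs (Tm.lam x M) σ) := hcs.1
      have hcsN : closedSubs N := hcs.2
      obtain ⟨hcsM, hok⟩ := (cs_applySubs σ _).mp hcs1
      simp only [fv] at hfv
      rw [Finset.union_eq_empty] at hfv
      obtain ⟨hfv1, hfvN⟩ := hfv
      constructor
      · simp only [fv]
        rw [Finset.union_eq_empty]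
        refine ⟨?_, hfvN⟩
        rw [Finset.eq_empty_iff_forall_notMem]
        intro a ha
        rw [Finset.mem_sdiff, Finset.mem_singleton] at ha
        obtain ⟨ha1, hax⟩ := ha
        rw [fv_applySubs σ M hok a] at ha1
        have : a ∈ fv (applySubs (Tm.lam x M) σ) := by
          rw [fv_applySubs σ _ hok a]
          exact ⟨by simp [fv, ha1.1, hax], ha1.2⟩
        rw [hfv1] at this
        simp at this
      · exact ⟨(cs_applySubs σ M).mpr ⟨hcsM, hok⟩, hcsN, hfvN⟩
    | pred_zero => exact ⟨rfl, trivial⟩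
    | pred_succ n => exact ⟨numeral_fv n, numeral_cs n⟩
    | ifz_zero M N =>
      simp only [fv] at hfv
      rw [Finset.union_eq_empty, Finset.union_eq_empty] at hfv
      exact ⟨hfv.1.2, hcs.2.1⟩
    | ifz_succ n M N =>
      simp only [fv] at hfv
      rw [Finset.union_eq_empty] at hfv
      exact ⟨hfv.2, hcs.2.2⟩
    | fix_unfold M =>
      simp only [fv] at hfv ⊢
      exact ⟨by rw [hfv]; simp, hcs, hcs⟩
  · cases hr with
    | var_hit x N σ hne hk hl =>
      obtain ⟨_, hok⟩ := (cs_applySubs σ _).mp hcs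
      have := hok (x, B) (lookup_mem σ x B hl)
      exact ⟨this.2, this.1⟩
    | var_miss x σ hne hk hl =>
      exfalso
      obtain ⟨_, hok⟩ := (cs_applySubs σ _).mp hcs
      have hx : x ∈ fv (applySubs (Tm.var x) σ) := by
        rw [fv_applySubs σ _ hok x]
        exact ⟨by simp [fv], (lookup_none_iff σ x).mp hl⟩
      rw [hfv] at hx
      simp at hx
    | zeroS σ hne hk => exact ⟨rfl, trivial⟩
    | appS M N σ hne hk =>
      obtain ⟨hcsMN, hok⟩ := (cs_applySubs σ _).mp hcs
      constructor
      · rw [Finset.eq_empty_iff_forall_notMem]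
        intro a ha
        simp only [fv, Finset.mem_union] at ha
        have : a ∈ fv (applySubs (Tm.app M N) σ) := by
          rw [fv_applySubs σ _ hok a]
          rcases ha with ha | ha <;>
            rw [fv_applySubs σ _ hok a] at ha
          · exact ⟨by simp [fv, ha.1], ha.2⟩
          · exact ⟨by simp [fv, ha.1], ha.2⟩
        rw [hfv] at this
        simp at this
      · exact ⟨(cs_applySubs σ M).mpr ⟨hcsMN.1, hok⟩, (cs_applySubs σ N).mpr ⟨hcsMN.2, hok⟩⟩
    | predS M σ hne hk =>
      obtain ⟨hcsM, hok⟩ := (cs_applySubs σ _).mp hcs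
      constructor
      · rw [Finset.eq_empty_iff_forall_notMem]
        intro a ha
        simp only [fv] at ha
        rw [fv_applySubs σ _ hok a] at ha
        have : a ∈ fv (applySubs (Tm.pred M) σ) := by
          rw [fv_applySubs σ _ hok a]; exact ha
        rw [hfv] at this; simp at this
      · exact (cs_applySubs σ M).mpr ⟨hcsM, hok⟩
    | succS M σ hne hk =>
      obtain ⟨hcsM, hok⟩ := (cs_applySubs σ _).mp hcs
      constructor
      · rw [Finset.eq_empty_iff_forall_notMem]
        intro a ha
        simp only [fv] at ha
        rw [fv_applySubs σ _ hok a] at ha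
        have : a ∈ fv (applySubs (Tm.succ M) σ) := by
          rw [fv_applySubs σ _ hok a]; exact ha
        rw [hfv] at this; simp at this
      · exact (cs_applySubs σ M).mpr ⟨hcsM, hok⟩
    | ifzS L M N σ hne hk =>
      obtain ⟨hcsLMN, hok⟩ := (cs_applySubs σ _).mp hcs
      constructor
      · rw [Finset.eq_empty_iff_forall_notMem]
        intro a ha
        simp only [fv, Finset.mem_union] at ha
        have : a ∈ fv (applySubs (Tm.ifz L M N) σ) := by
          rw [fv_applySubs σ _ hok a]
          rcases ha with (ha | ha) | ha <;>
            rw [fv_applySubs σ _ hok a] at ha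
          · exact ⟨by simp [fv, ha.1], ha.2⟩
          · exact ⟨by simp [fv, ha.1], ha.2⟩
          · exact ⟨by simp [fv, ha.1], ha.2⟩
        rw [hfv] at this
        simp at this
      · exact ⟨(cs_applySubs σ L).mpr ⟨hcsLMN.1, hok⟩,
          (cs_applySubs σ M).mpr ⟨hcsLMN.2.1, hok⟩,
          (cs_applySubs σ N).mpr ⟨hcsLMN.2.2, hok⟩⟩
    | fixS M σ hne hk =>
      obtain ⟨hcsM, hok⟩ := (cs_applySubs σ _).mp hcs
      constructor
      · rw [Finset.eq_empty_iff_forall_notMem]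
        intro a ha
        simp only [fv] at ha
        rw [fv_applySubs σ _ hok a] at ha
        have : a ∈ fv (applySubs (Tm.fixp M) σ) := by
          rw [fv_applySubs σ _ hok a]; exact ha
        rw [hfv] at this; simp at this
      · exact (cs_applySubs σ M).mpr ⟨hcsM, hok⟩

theorem pr_collapse {A B : Tm} (hr : PrRedex A B) (hcs : closedSubs A) :
    collapse A = collapse B := by
  cases hr with
  | var_hit x N σ hne hk hl =>
    obtain ⟨_, hok⟩ := (cs_applySubs σ _).mp hcs
    rw [collapse_applySubs]
    exact chain_var_hit σ x B hok hl
  | var_miss x σ hne hk hl =>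
    rw [collapse_applySubs]
    exact chain_var_none σ x hl
  | zeroS σ hne hk =>
    rw [collapse_applySubs]
    exact chain_zero σ
  | appS M N σ hne hk =>
    simp only [collapse_applySubs, collapse]
    rw [chain_app]
  | predS M σ hne hk =>
    simp only [collapse_applySubs, collapse]
    rw [chain_pred]
  | succS M σ hne hk =>
    simp only [collapse_applySubs, collapse]
    rw [chain_succ]
  | ifzS L M N σ hne hk =>
    simp only [collapse_applySubs, collapse]
    rw [chain_ifz]
  | fixS M σ hne hk =>
    simp only [collapse_applySubs, collapse]
    rw [chain_fixp]

theorem cr_collapse {A B : Tm} (hr : CrRedex A B) :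
    PcfRedex (collapse A) (collapse B) ∨ Bad B := by
  cases hr with
  | beta x M N σ hk =>
    by_cases hx : x ∈ σ.map Prod.fst
    · right
      intro hnd
      rw [spine_esub, spine_applySubs, List.map_append, List.nodup_append] at hnd
      have hx1 : x ∈ List.map Prod.fst (spine M ++ σ) := by
        rw [List.map_append]
        exact List.mem_append_right _ hx
      exact hnd.2.2 x hx1 x (by simp) rfl
    · left
      simp only [collapse, collapse_applySubs]
      rw [chain_lam σ x (collapse M) hx]
      exact PcfRedex.beta x _ _
  | pred_zero =>
    left
    simp only [collapse]
    exact PcfRedex.pred_zero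
  | pred_succ n =>
    left
    simp only [collapse, numeral_collapse]
    exact PcfRedex.pred_succ n
  | ifz_zero M N =>
    left
    simp only [collapse]
    exact PcfRedex.ifz_zero _ _
  | ifz_succ n M N =>
    left
    simp only [collapse, numeral_collapse]
    exact PcfRedex.ifz_succ n _ _
  | fix_unfold M =>
    left
    simp only [collapse]
    exact PcfRedex.fix_unfold _

theorem whstep_preserve {M M' : Tm} (hP : IsProgram M) (h : WhStep M M') :
    IsProgram M' := by
  obtain ⟨hfv, hcs⟩ := hP
  have hdec : ∃ E A B, (CrRedex A B ∨ PrRedex A B) ∧ M = fill E A ∧ M' = fill E B := by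
    rcases h with ⟨E, A, B, hr, h1, h2⟩ | ⟨E, A, B, hr, h1, h2⟩
    exacts [⟨E, A, B, Or.inl hr, h1, h2⟩, ⟨E, A, B, Or.inr hr, h1, h2⟩]
  obtain ⟨E, A, B, hr, rfl, rfl⟩ := hdec
  have hfvA : fv A = ∅ := Finset.subset_empty.mp (hfv ▸ fv_fill_sub E A)
  have hcsA : closedSubs A := cs_fill_elim E A hcs
  obtain ⟨hfvB, hcsB⟩ := redex_preserve hr hfvA hcsA
  refine ⟨?_, cs_fill_intro E A B hcs hcsB⟩
  have hmono := fv_fill_mono E A B (by rw [hfvB]; exact Finset.empty_subset _)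
  rw [hfv] at hmono
  exact Finset.subset_empty.mp hmono
theorem key_induction (n : ℕ) :
    ∀ M, WhSteps M (numeral n) → IsProgram M → PcfSteps (collapse M) (numeral n) := by
  intro M h
  induction h using Relation.ReflTransGen.head_induction_on with
  | refl =>
    intro _
    rw [numeral_collapse]
    exact Relation.ReflTransGen.refl
  | head hstep hrest ih =>
    intro hP
    have hP' := whstep_preserve hP hstep
    rcases hstep with ⟨E, A, B, hr, rfl, rfl⟩ | ⟨E, A, B, hr, rfl, rfl⟩
    · -- computation step
      rcases cr_collapse hr with hpcf | hbad
      · exact Relation.ReflTransGen.head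
          ⟨collapseE E, _, _, hpcf, collapse_fill E A, collapse_fill E B⟩ (ih hP')
      · exfalso
        rcases Relation.ReflTransGen.cases_head hrest with heq | ⟨c', hst, _⟩
        · obtain ⟨M₀, x₀, N₀, rfl⟩ := bad_esub hbad
          exact fill_ne_numeral E M₀ x₀ N₀ n heq
        · rcases hst with ⟨E', A', B', hr', h1', _⟩ | ⟨E', A', B', hr', h1', _⟩
          · exact no_step A' B' (Or.inl hr') E B hbad E' h1'
          · exact no_step A' B' (Or.inr hr') E B hbad E' h1'
    · -- percolation step
      have hcsA : closedSubs A := cs_fill_elim E A hP.2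
      have heq : collapse (fill E A) = collapse (fill E B) := by
        rw [collapse_fill, collapse_fill, pr_collapse hr hcsA]
      rw [heq]
      exact ih hP'
/-- If an EPCF program weak-head reduces to a numeral, its collapse PCF-reduces
to the same numeral. -/
theorem stmt_6 (M : Tm) (n : ℕ) (hM : IsProgram M)
    (h : WhSteps M (numeral n)) : PcfSteps (collapse M) (numeral n) := by
  exact key_induction n M h hM
end

section
/- The fixed-point machine unfolds correctly: for every address a, Y@[a] reduces in exactly 5 steps to #⁻¹(a)@[#(Y@[a])], i.e., applying Y to a yields the machine at address a applied to the address of Y@[a] itself. -/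
/-- Programs of extended addressing machines. -/
inductive Prog : Type
  | eps : Prog
  | call : ℕ → Prog
  | load : ℕ → Prog → Prog
  | appI : ℕ → ℕ → ℕ → Prog → Prog
  | test : ℕ → ℕ → ℕ → ℕ → Prog → Prog
  | predI : ℕ → ℕ → Prog → Prog
  | succI : ℕ → ℕ → Prog → Prog

/-- An extended addressing machine over a type `A` of addresses:
registers (holding an address or `∅`), a program and an input tape. -/
structure EAM (A : Type*) where
  regs : List (Option A)
  prog : Prog
  tape : List A

/-- `M@T'`: the machine `M` with its tape extended by `T'`. -/
def appT {A : Type*} (M : EAM A) (T : List A) : EAM A :=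
  ⟨M.regs, M.prog, M.tape ++ T⟩

/-- Update register `i` (a no-op if the register does not exist). -/
def setReg {A : Type*} (R : List (Option A)) (i : ℕ) (a : A) : List (Option A) :=
  R.set i (some a)

/-- The application map on addresses: `a · b = #(#⁻¹(a)@[b])`. -/
def appMap {A : Type*} (tbl : EAM A ≃ A) (a b : A) : A :=
  tbl (appT (tbl.symm a) [b])

/-- The `n`-th numeral machine `n̄ = ⟨R₀ = n, ε, []⟩`. -/
def numMach {A : Type*} (ι : ℕ → A) (n : ℕ) : EAM A :=
  ⟨[some (ι n)], .eps, []⟩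

/-- The machine `Y^a`. -/
def Ymach {A : Type*} (a : A) : EAM A :=
  ⟨[none, none],
   .load 0 (.load 1 (.appI 0 1 0 (.appI 1 0 1 (.call 1)))), [a]⟩

/-- Small-step operational semantics of extended addressing machines, with
respect to an identification `ι` of ℕ inside the addresses and a bijective
address table map `tbl`. -/
inductive Step {A : Type*} (ι : ℕ → A) (tbl : EAM A ≃ A) : EAM A → EAM A → Prop
  | call (R : List (Option A)) (i : ℕ) (T : List A) (a : A) :
      R.getD i none = some a →
      Step ι tbl ⟨R, .call i, T⟩ (appT (tbl.symm a) T)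
  | load (R : List (Option A)) (i : ℕ) (P : Prog) (a : A) (T : List A) :
      Step ι tbl ⟨R, .load i P, a :: T⟩ ⟨setReg R i a, P, T⟩
  | appI (R : List (Option A)) (i j k : ℕ) (P : Prog) (T : List A) (a b : A) :
      R.getD i none = some a → R.getD j none = some b →
      Step ι tbl ⟨R, .appI i j k P, T⟩ ⟨setReg R k (appMap tbl a b), P, T⟩
  | predNum (R : List (Option A)) (i j : ℕ) (P : Prog) (T : List A) (n : ℕ) :
      R.getD i none = some (ι n) →
      Step ι tbl ⟨R, .predI i j P, T⟩ ⟨setReg R j (ι (n - 1)), P, T⟩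
  | succNum (R : List (Option A)) (i j : ℕ) (P : Prog) (T : List A) (n : ℕ) :
      R.getD i none = some (ι n) →
      Step ι tbl ⟨R, .succI i j P, T⟩ ⟨setReg R j (ι (n + 1)), P, T⟩
  | testZero (R : List (Option A)) (i j k l : ℕ) (P : Prog) (T : List A) (b : A) :
      R.getD i none = some (ι 0) → R.getD j none = some b →
      Step ι tbl ⟨R, .test i j k l P, T⟩ ⟨setReg R l b, P, T⟩
  | testPos (R : List (Option A)) (i j k l : ℕ) (P : Prog) (T : List A) (n : ℕ) (c : A) :
      R.getD i none = some (ι (n + 1)) → R.getD k none = some c →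
      Step ι tbl ⟨R, .test i j k l P, T⟩ ⟨setReg R l c, P, T⟩
  | predMach (R : List (Option A)) (i j : ℕ) (P : Prog) (T : List A) (a : A) (M' : EAM A) :
      R.getD i none = some a → (∀ n, a ≠ ι n) →
      Step ι tbl (tbl.symm a) M' →
      Step ι tbl ⟨R, .predI i j P, T⟩ ⟨setReg R i (tbl M'), .predI i j P, T⟩
  | succMach (R : List (Option A)) (i j : ℕ) (P : Prog) (T : List A) (a : A) (M' : EAM A) :
      R.getD i none = some a → (∀ n, a ≠ ι n) →
      Step ι tbl (tbl.symm a) M' →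
      Step ι tbl ⟨R, .succI i j P, T⟩ ⟨setReg R i (tbl M'), .succI i j P, T⟩
  | testMach (R : List (Option A)) (i j k l : ℕ) (P : Prog) (T : List A) (a : A) (M' : EAM A) :
      R.getD i none = some a → (∀ n, a ≠ ι n) →
      Step ι tbl (tbl.symm a) M' →
      Step ι tbl ⟨R, .test i j k l P, T⟩ ⟨setReg R i (tbl M'), .test i j k l P, T⟩

/-- Multistep reduction of EAMs. -/
def Steps {A : Type*} (ι : ℕ → A) (tbl : EAM A ≃ A) : EAM A → EAM A → Prop :=
  Relation.ReflTransGen (Step ι tbl)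

/-- Reduction in exactly `n` steps. -/
def StepN {A : Type*} (ι : ℕ → A) (tbl : EAM A ≃ A) : ℕ → EAM A → EAM A → Prop
  | 0, M, N => M = N
  | n + 1, M, N => ∃ K, Step ι tbl M K ∧ StepN ι tbl n K N

/-- The fixed-point machine unfolds correctly: if `𝐘 = Y^{y0}` has address
`y0`, then for every address `a`, `𝐘@[a]` reduces in exactly 5 steps to
`#⁻¹(a)@[#(𝐘@[a])]`. -/
theorem stmt_18 {A : Type} (ι : ℕ → A) (tbl : EAM A ≃ A)
    (y0 : A) (hy0 : tbl (Ymach y0) = y0) (a : A) :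
    StepN ι tbl 5 (appT (Ymach y0) [a])
      (appT (tbl.symm a) [tbl (appT (Ymach y0) [a])]) := by
  refine ⟨_, Step.load _ 0 _ y0 [a], ?_⟩
  refine ⟨_, Step.load _ 1 _ a [], ?_⟩
  refine ⟨_, Step.appI _ 0 1 0 _ [] y0 a rfl rfl, ?_⟩
  refine ⟨_, Step.appI _ 1 0 1 _ [] a _ rfl rfl, ?_⟩
  refine ⟨_, Step.call _ 1 [] _ rfl, ?_⟩
  show appT _ [] = _
  have hs : tbl.symm y0 = Ymach y0 := (Equiv.symm_apply_eq tbl).mpr hy0.symm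
  simp only [appMap, hs, hy0, Equiv.symm_apply_apply]
  simp [appT, Ymach]
end

section
/- The applier machines compose applications correctly: for all addresses a, d₁,…,d_k, e₁,…,e_n, the machine App_{n,k}@[a, d₁,…,d_k, e₁,…,e_n] reduces in exactly (3k+4)·n + 2 steps to #⁻¹(a)@[d₁·e₁⋯e_n, …, d_k·e₁⋯e_n]. -/
/-- The identity machine `I`. -/
def Imach {A : Type*} : EAM A := ⟨[none], .load 0 (.call 0), []⟩

/-- The program of the machine `App_{n+1,k}`:
`Load(1,…,k+2); App 2 (k+2) 2; …; App (k+1) (k+2) (k+1);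
 App 0 1 0; …; App 0 (k+1) 0; Call 0`. -/
def appProg (k : ℕ) : Prog :=
  (List.range (k + 2)).foldr (fun m P => .load (m + 1) P)
    ((List.range k).foldr (fun m P => .appI (m + 2) (k + 2) (m + 2) P)
      ((List.range (k + 1)).foldr (fun m P => .appI 0 (m + 1) 0 P) (.call 0)))

/-- The applier machines `App_{n,k}`. -/
def appMach {A : Type*} (tbl : EAM A ≃ A) : ℕ → ℕ → EAM A
  | 0, _ => Imach
  | n + 1, k =>
      ⟨some (tbl (appMach tbl n k)) :: List.replicate (k + 2) none, appProg k, []⟩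


/-! ### Auxiliary machinery for the proof -/

section Aux

variable {A : Type} (ι : ℕ → A) (tbl : EAM A ≃ A)

lemma stepN_trans {m n : ℕ} {M K N : EAM A} (h1 : StepN ι tbl m M K)
    (h2 : StepN ι tbl n K N) : StepN ι tbl (m + n) M N := by
  induction m generalizing M with
  | zero => simp only [StepN] at h1; subst h1; simpa using h2
  | succ m ih =>
      obtain ⟨L, s, h⟩ := h1
      rw [Nat.succ_add]
      exact ⟨L, s, ih h⟩

lemma stepN_cast {m n : ℕ} {M M' N N' : EAM A} (hm : m = n) (hM : M = M') (hN : N = N')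
    (h : StepN ι tbl m M N) : StepN ι tbl n M' N' := hm ▸ hM ▸ hN ▸ h

lemma getD_append (pre l : List (Option A)) (m : ℕ) :
    (pre ++ l).getD (pre.length + m) none = l.getD m none := by
  induction pre with
  | nil => simp
  | cons p pre ih =>
      simpa [List.length_cons, Nat.add_right_comm _ 1 m] using ih

lemma set_append (pre l : List (Option A)) (m : ℕ) (x : Option A) :
    (pre ++ l).set (pre.length + m) x = pre ++ l.set m x := by
  induction pre with
  | nil => simp
  | cons p pre ih =>
      simpa [List.length_cons, Nat.add_right_comm _ 1 m] using ih

/-- `Load s; Load (s+1); …; Load (s+t-1); P` -/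
def loadP : ℕ → ℕ → Prog → Prog
  | _, 0, P => P
  | s, t + 1, P => .load s (loadP (s + 1) t P)

/-- `App s j s; App (s+1) j (s+1); …; App (s+t-1) j (s+t-1); P` -/
def app1P (j : ℕ) : ℕ → ℕ → Prog → Prog
  | _, 0, P => P
  | s, t + 1, P => .appI s j s (app1P j (s + 1) t P)

/-- `App 0 s 0; App 0 (s+1) 0; …; App 0 (s+t-1) 0; P` -/
def app2P : ℕ → ℕ → Prog → Prog
  | _, 0, P => P
  | s, t + 1, P => .appI 0 s 0 (app2P (s + 1) t P)

lemma loadP_snoc (t : ℕ) : ∀ (s : ℕ) (P : Prog),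
    loadP s t (.load (t + s) P) = loadP s (t + 1) P := by
  induction t with
  | zero => intro s P; rw [Nat.zero_add]; rfl
  | succ t ih =>
      intro s P
      show Prog.load s (loadP (s + 1) t (.load (t + 1 + s) P))
        = Prog.load s (loadP (s + 1) (t + 1) P)
      rw [show t + 1 + s = t + (s + 1) by omega, ih]

lemma app1P_snoc (j t : ℕ) : ∀ (s : ℕ) (P : Prog),
    app1P j s t (.appI (t + s) j (t + s) P) = app1P j s (t + 1) P := by
  induction t with
  | zero => intro s P; rw [Nat.zero_add]; rfl
  | succ t ih =>
      intro s P
      show Prog.appI s j s (app1P j (s + 1) t (.appI (t + 1 + s) j (t + 1 + s) P))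
        = Prog.appI s j s (app1P j (s + 1) (t + 1) P)
      rw [show t + 1 + s = t + (s + 1) by omega, ih]

lemma app2P_snoc (t : ℕ) : ∀ (s : ℕ) (P : Prog),
    app2P s t (.appI 0 (t + s) 0 P) = app2P s (t + 1) P := by
  induction t with
  | zero => intro s P; rw [Nat.zero_add]; rfl
  | succ t ih =>
      intro s P
      show Prog.appI 0 s 0 (app2P (s + 1) t (.appI 0 (t + 1 + s) 0 P))
        = Prog.appI 0 s 0 (app2P (s + 1) (t + 1) P)
      rw [show t + 1 + s = t + (s + 1) by omega, ih]

lemma range_foldr_load (t : ℕ) : ∀ (s : ℕ) (P : Prog),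
    (List.range t).foldr (fun m Q => .load (m + s) Q) P = loadP s t P := by
  induction t with
  | zero => intro s P; rfl
  | succ t ih =>
      intro s P
      rw [List.range_succ, List.foldr_append, List.foldr_cons, List.foldr_nil, ih,
        loadP_snoc]

lemma range_foldr_app1 (j t : ℕ) : ∀ (s : ℕ) (P : Prog),
    (List.range t).foldr (fun m Q => .appI (m + s) j (m + s) Q) P = app1P j s t P := by
  induction t with
  | zero => intro s P; rfl
  | succ t ih =>
      intro s P
      rw [List.range_succ, List.foldr_append, List.foldr_cons, List.foldr_nil, ih,
        app1P_snoc]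

lemma range_foldr_app2 (t : ℕ) : ∀ (s : ℕ) (P : Prog),
    (List.range t).foldr (fun m Q => .appI 0 (m + s) 0 Q) P = app2P s t P := by
  induction t with
  | zero => intro s P; rfl
  | succ t ih =>
      intro s P
      rw [List.range_succ, List.foldr_append, List.foldr_cons, List.foldr_nil, ih,
        app2P_snoc]

lemma appProg_eq (k : ℕ) :
    appProg k = loadP 1 (k + 2) (app1P (k + 2) 2 k (app2P 1 (k + 1) (.call 0))) := by
  rw [appProg, range_foldr_load, range_foldr_app1, range_foldr_app2]

/-- Load consecutive registers starting at `s` with the values `ts`. -/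
def lset : List (Option A) → ℕ → List A → List (Option A)
  | R, _, [] => R
  | R, s, t :: ts => lset (setReg R s t) (s + 1) ts

lemma lset_cons (ts : List A) : ∀ (r : Option A) (R : List (Option A)) (s : ℕ),
    lset (r :: R) (s + 1) ts = r :: lset R s ts := by
  induction ts with
  | nil => intro r R s; rfl
  | cons t ts ih =>
      intro r R s
      show lset (setReg (r :: R) (s + 1) t) (s + 2) ts = r :: lset (setReg R s t) (s + 1) ts
      rw [show setReg (r :: R) (s + 1) t = r :: setReg R s t from rfl, ih]

lemma lset_replicate (ts : List A) :
    lset (List.replicate ts.length none) 0 ts = ts.map some := by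
  induction ts with
  | nil => rfl
  | cons t ts ih =>
      show lset (setReg (none :: List.replicate ts.length none) 0 t) 1 ts = some t :: ts.map some
      rw [show setReg (none :: List.replicate ts.length (none : Option A)) 0 t
        = some t :: List.replicate ts.length none from rfl, show (1 : ℕ) = 0 + 1 from rfl,
        lset_cons, ih]

lemma lset_replicate' (ts : List A) (n : ℕ) (h : n = ts.length) :
    lset (List.replicate n none) 0 ts = ts.map some := h ▸ lset_replicate ts

lemma stepN_load (ts : List A) : ∀ (s : ℕ) (R : List (Option A)) (P : Prog) (rest : List A),
    StepN ι tbl ts.length ⟨R, loadP s ts.length P, ts ++ rest⟩ ⟨lset R s ts, P, rest⟩ := by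
  induction ts with
  | nil => intro s R P rest; rfl
  | cons t ts ih =>
      intro s R P rest
      exact ⟨_, Step.load R s (loadP (s + 1) ts.length P) t (ts ++ rest),
        ih (s + 1) (setReg R s t) P rest⟩

lemma stepN_app1 (xs : List A) : ∀ (pre : List (Option A)) (e : A) (P : Prog) (T : List A)
    (j : ℕ), j = pre.length + xs.length →
    StepN ι tbl xs.length
      ⟨pre ++ xs.map some ++ [some e], app1P j pre.length xs.length P, T⟩
      ⟨pre ++ (xs.map fun x => appMap tbl x e).map some ++ [some e], P, T⟩ := by
  induction xs with
  | nil => intro pre e P T j hj; rfl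
  | cons x xs ih =>
      intro pre e P T j hj
      refine ⟨_, Step.appI _ pre.length j pre.length _ T x e ?_ ?_, ?_⟩
      · rw [List.append_assoc]
        simpa using getD_append pre (some x :: (xs.map some ++ [some e])) 0
      · subst hj
        rw [List.append_assoc, List.length_cons, getD_append]
        simpa using getD_append (List.map some (x :: xs)) [some e] 0
      · have hreg : setReg (pre ++ (x :: xs).map some ++ [some e]) pre.length
            (appMap tbl x e)
            = (pre ++ [some (appMap tbl x e)]) ++ xs.map some ++ [some e] := by
          rw [setReg, List.append_assoc,
            show pre.length = pre.length + 0 from rfl, set_append]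
          simp
        rw [hreg]
        refine stepN_cast ι tbl rfl ?_ ?_
          (ih (pre ++ [some (appMap tbl x e)]) e P T j (by simp [hj]; omega))
        · simp
        · simp

lemma stepN_app2 (xs : List A) : ∀ (done suf : List (Option A)) (c : A) (P : Prog)
    (T : List A),
    StepN ι tbl xs.length
      ⟨some c :: (done ++ xs.map some ++ suf), app2P (done.length + 1) xs.length P, T⟩
      ⟨some (xs.foldl (appMap tbl) c) :: (done ++ xs.map some ++ suf), P, T⟩ := by
  induction xs with
  | nil => intro done suf c P T; rfl
  | cons x xs ih =>
      intro done suf c P T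
      refine ⟨_, Step.appI _ 0 (done.length + 1) 0 _ T c x rfl ?_, ?_⟩
      · rw [List.getD_cons_succ, List.append_assoc]
        simpa using getD_append done (some x :: (xs.map some ++ suf)) 0
      · have hreg : setReg (some c :: (done ++ (x :: xs).map some ++ suf)) 0
            (appMap tbl c x)
            = some (appMap tbl c x) :: ((done ++ [some x]) ++ xs.map some ++ suf) := by
          simp [setReg]
        rw [hreg]
        refine stepN_cast ι tbl rfl ?_ ?_
          (ih (done ++ [some x]) suf (appMap tbl c x) P T)
        · simp [Nat.add_assoc]
        · simp

lemma symm_foldl (xs : List A) : ∀ a : A,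
    tbl.symm (xs.foldl (appMap tbl) a) = appT (tbl.symm a) xs := by
  induction xs with
  | nil => intro a; simp [appT]
  | cons x xs ih =>
      intro a
      rw [List.foldl_cons, ih, appMap, Equiv.symm_apply_apply]
      simp [appT]

lemma appMach_main (es : List A) : ∀ (a : A) (ds : List A),
    StepN ι tbl ((3 * ds.length + 4) * es.length + 2)
      (appT (appMach tbl es.length ds.length) (a :: (ds ++ es)))
      (appT (tbl.symm a) (ds.map fun d => es.foldl (appMap tbl) d)) := by
  induction es with
  | nil =>
      intro a ds
      have h : StepN ι tbl 2 (⟨[none], .load 0 (.call 0), a :: ds⟩ : EAM A)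
          (appT (tbl.symm a) ds) :=
        ⟨_, Step.load [none] 0 (.call 0) a ds, _, Step.call _ 0 ds a rfl, rfl⟩
      exact stepN_cast ι tbl (by simp) (by simp [appT, appMach, Imach])
        (by simp [appT]) h
  | cons e es ih =>
      intro a ds
      set a₀ := tbl (appMach tbl es.length ds.length) with ha₀
      set ds' := ds.map (fun d => appMap tbl d e) with hds'
      set P₂ := app2P 1 (ds.length + 1) (.call 0) with hP₂
      set P₁ := app1P (ds.length + 2) 2 ds.length P₂ with hP₁
      have h1 : StepN ι tbl (ds.length + 2)
          ⟨some a₀ :: List.replicate (ds.length + 2) none,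
            loadP 1 (ds.length + 2) P₁, (a :: ds ++ [e]) ++ es⟩
          ⟨some a₀ :: some a :: ds.map some ++ [some e], P₁, es⟩ := by
        refine stepN_cast ι tbl (by simp) ?_ ?_
          (stepN_load ι tbl (a :: ds ++ [e]) 1 (some a₀ :: List.replicate (ds.length + 2) none)
            P₁ es)
        · congr 1 <;> simp
        · congr 1
          rw [show (1 : ℕ) = 0 + 1 from rfl, lset_cons,
            lset_replicate' (a :: ds ++ [e]) _ (by simp)]
          simp
      have h2 : StepN ι tbl ds.length
          ⟨some a₀ :: some a :: ds.map some ++ [some e], P₁, es⟩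
          ⟨some a₀ :: some a :: ds'.map some ++ [some e], P₂, es⟩ := by
        have := stepN_app1 ι tbl ds [some a₀, some a] e P₂ es (ds.length + 2) (by simp; omega)
        refine stepN_cast ι tbl rfl ?_ ?_ this <;> simp [hds', hP₁]
      have h3 : StepN ι tbl (ds.length + 1)
          ⟨some a₀ :: some a :: ds'.map some ++ [some e], P₂, es⟩
          ⟨some ((a :: ds').foldl (appMap tbl) a₀) :: some a :: ds'.map some ++ [some e],
            .call 0, es⟩ := by
        have := stepN_app2 ι tbl (a :: ds') [] [some e] a₀ (.call 0) es
        refine stepN_cast ι tbl (by simp [hds']) ?_ ?_ this <;>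
          simp [hP₂, hds']
      have h4 : StepN ι tbl 1
          ⟨some ((a :: ds').foldl (appMap tbl) a₀) :: some a :: ds'.map some ++ [some e],
            .call 0, es⟩
          (appT (appMach tbl es.length ds.length) (a :: (ds' ++ es))) := by
        refine ⟨_, Step.call _ 0 es ((a :: ds').foldl (appMap tbl) a₀) rfl, ?_⟩
        show appT (tbl.symm ((a :: ds').foldl (appMap tbl) a₀)) es = _
        rw [symm_foldl, ha₀, Equiv.symm_apply_apply]
        simp [appT]
      have h5 : StepN ι tbl ((3 * ds.length + 4) * es.length + 2)
          (appT (appMach tbl es.length ds.length) (a :: (ds' ++ es)))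
          (appT (tbl.symm a) (ds.map fun d => (e :: es).foldl (appMap tbl) d)) := by
        have h := ih a ds'
        refine stepN_cast ι tbl ?_ ?_ ?_ h
        · simp [hds']
        · simp [hds']
        · simp only [hds', List.map_map]
          rfl
      have := stepN_trans ι tbl h1 (stepN_trans ι tbl h2 (stepN_trans ι tbl h3
        (stepN_trans ι tbl h4 h5)))
      refine stepN_cast ι tbl ?_ ?_ rfl this
      · simp only [List.length_cons]; ring
      · rw [show (e :: es).length = es.length + 1 from rfl]
        show (⟨_, loadP 1 (ds.length + 2) P₁, _⟩ : EAM A) = _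
        rw [hP₁, hP₂, ← appProg_eq]
        simp [appMach, appT, ha₀]

end Aux

/-- The applier machines compose applications correctly:
`App_{n,k}@[a,d₁,…,d_k,e₁,…,e_n]` reduces in exactly `(3k+4)·n + 2` steps to
`#⁻¹(a)@[d₁·e₁⋯e_n, …, d_k·e₁⋯e_n]`. -/
theorem stmt_19 {A : Type} (ι : ℕ → A) (tbl : EAM A ≃ A) (n k : ℕ)
    (hk : 0 < k) (a : A) (ds es : List A)
    (hd : ds.length = k) (he : es.length = n) :
    StepN ι tbl ((3 * k + 4) * n + 2)
      (appT (appMach tbl n k) (a :: (ds ++ es)))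
      (appT (tbl.symm a) (ds.map fun d => es.foldl (appMap tbl) d)) := by
  subst hd he
  exact appMach_main ι tbl es a ds
end
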